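/- Let C > 0, let δ_n ↓ 0, and for each n let w_n : ℝ^d × Ω → ℝ be jointly measurable and stationary, with w_n(·, ω) Lipschitz with constant C for every ω and sup_n sup_{x,ω} |δ_n w_n(x, ω)| ≤ C. Define Φ_n : Ω → Ω × Θ_C × [−C, C] by Φ_n(ω) := (ω, w_n(·, ω) − w_n(0, ω), −δ_n w_n(0, ω)), and let μ_n be the pushforward of ℙ under Φ_n. If μ_n converges weakly to a Borel probability measure μ, then for every x ∈ ℝ^d the pushforward of μ under τ̃_x equals μ. -/

import Mathlib

open MeasureTheory Filter Topology
open scoped ENNReal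

noncomputable section

/-- Euclidean space `ℝ^d`. -/
abbrev EucSp (d : ℕ) := EuclideanSpace ℝ (Fin d)

/-- `Θ_C`: functions `θ : ℝ^d → ℝ` with `θ 0 = 0` that are Lipschitz with constant `C`. -/
def Theta (d : ℕ) (C : ℝ) : Type :=
  {θ : EucSp d → ℝ // θ 0 = 0 ∧ ∀ x y, |θ x - θ y| ≤ C * ‖x - y‖}

/-- The distance `d(θ₁, θ₂) = sup_x |θ₁ x - θ₂ x| / (1 + |x|²)`. -/
noncomputable def thetaDist {d : ℕ} {C : ℝ} (θ₁ θ₂ : Theta d C) : ℝ :=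
  ⨆ x : EucSp d, |θ₁.1 x - θ₂.1 x| / (1 + ‖x‖ ^ 2)

theorem thetaDist_term_le {d : ℕ} {C : ℝ} (θ₁ θ₂ : Theta d C) (x : EucSp d) :
    |θ₁.1 x - θ₂.1 x| / (1 + ‖x‖ ^ 2) ≤ |C| := by
  have hx : (0:ℝ) < 1 + ‖x‖ ^ 2 := by positivity
  have a := θ₁.2.2 x 0
  have b := θ₂.2.2 x 0
  rw [θ₁.2.1] at a
  rw [θ₂.2.1] at b
  simp only [sub_zero] at a b
  have h1 : |θ₁.1 x - θ₂.1 x| ≤ |θ₁.1 x| + |θ₂.1 x| := abs_sub _ _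
  rw [div_le_iff₀ hx]
  nlinarith [abs_nonneg C, norm_nonneg x, sq_nonneg (‖x‖ - 1), le_abs_self C,
    mul_nonneg (abs_nonneg C) (sq_nonneg (‖x‖ - 1)),
    mul_nonneg (sub_nonneg.mpr (le_abs_self C)) (norm_nonneg x)]

theorem thetaDist_bddAbove {d : ℕ} {C : ℝ} (θ₁ θ₂ : Theta d C) :
    BddAbove (Set.range fun x : EucSp d => |θ₁.1 x - θ₂.1 x| / (1 + ‖x‖ ^ 2)) := by
  refine ⟨|C|, ?_⟩
  rintro y ⟨x, rfl⟩
  exact thetaDist_term_le θ₁ θ₂ x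

/-- `(Θ_C, thetaDist)` is a metric space. -/
noncomputable instance {d : ℕ} {C : ℝ} : MetricSpace (Theta d C) where
  dist := thetaDist
  dist_self θ := by simp [thetaDist]
  dist_comm θ₁ θ₂ := by
    unfold thetaDist
    exact iSup_congr fun x => by rw [abs_sub_comm]
  dist_triangle θ₁ θ₂ θ₃ := by
    refine ciSup_le fun x => ?_
    have h : |θ₁.1 x - θ₃.1 x| / (1 + ‖x‖ ^ 2) ≤
        |θ₁.1 x - θ₂.1 x| / (1 + ‖x‖ ^ 2) + |θ₂.1 x - θ₃.1 x| / (1 + ‖x‖ ^ 2) := by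
      rw [← add_div]
      gcongr
      exact abs_sub_le _ _ _
    refine h.trans (add_le_add ?_ ?_)
    · exact le_ciSup (thetaDist_bddAbove θ₁ θ₂) x
    · exact le_ciSup (thetaDist_bddAbove θ₂ θ₃) x
  eq_of_dist_eq_zero {θ₁ θ₂} h := by
    have h' : thetaDist θ₁ θ₂ = 0 := h
    apply Subtype.ext
    funext x
    have hx : (0:ℝ) < 1 + ‖x‖ ^ 2 := by positivity
    have hle : |θ₁.1 x - θ₂.1 x| / (1 + ‖x‖ ^ 2) ≤ thetaDist θ₁ θ₂ :=
      le_ciSup (thetaDist_bddAbove θ₁ θ₂) x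
    rw [h'] at hle
    have h0 : 0 ≤ |θ₁.1 x - θ₂.1 x| / (1 + ‖x‖ ^ 2) := by positivity
    have heq : |θ₁.1 x - θ₂.1 x| / (1 + ‖x‖ ^ 2) = 0 := le_antisymm hle h0
    rcases div_eq_zero_iff.mp heq with hnum | hden
    · exact sub_eq_zero.mp (abs_eq_zero.mp hnum)
    · exact absurd hden hx.ne'

instance {d : ℕ} {C : ℝ} : MeasurableSpace (Theta d C) := borel _
instance {d : ℕ} {C : ℝ} : BorelSpace (Theta d C) := ⟨rfl⟩

/-- The shift `θ ↦ θ(· + x) − θ(x)` on `Θ_C`. -/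
def Theta.shift {d : ℕ} {C : ℝ} (x : EucSp d) (θ : Theta d C) : Theta d C :=
  ⟨fun y => θ.1 (y + x) - θ.1 x, by simp [θ.2.1], fun y z => by
    have h := θ.2.2 (y + x) (z + x)
    simpa using h⟩

section Aux

variable {d : ℕ} {C : ℝ}

theorem theta_apply_le (θ₁ θ₂ : Theta d C) (z : EucSp d) :
    |θ₁.1 z - θ₂.1 z| ≤ dist θ₁ θ₂ * (1 + ‖z‖ ^ 2) := by
  have hz : (0:ℝ) < 1 + ‖z‖ ^ 2 := by positivity
  have h := le_ciSup (thetaDist_bddAbove θ₁ θ₂) z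
  have : dist θ₁ θ₂ = thetaDist θ₁ θ₂ := rfl
  rw [this]
  rw [div_le_iff₀ hz] at h
  unfold thetaDist
  exact h

theorem shift_lipschitz (x : EucSp d) (θ₁ θ₂ : Theta d C) :
    dist (Theta.shift x θ₁) (Theta.shift x θ₂) ≤ (3 + 3 * ‖x‖ ^ 2) * dist θ₁ θ₂ := by
  have hD : (0:ℝ) ≤ dist θ₁ θ₂ := dist_nonneg
  show thetaDist _ _ ≤ _
  refine ciSup_le fun y => ?_
  have hy : (0:ℝ) < 1 + ‖y‖ ^ 2 := by positivity
  rw [div_le_iff₀ hy]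
  have h1 : |θ₁.1 (y + x) - θ₂.1 (y + x)| ≤ dist θ₁ θ₂ * (1 + ‖y + x‖ ^ 2) :=
    theta_apply_le θ₁ θ₂ (y + x)
  have h2 : |θ₁.1 x - θ₂.1 x| ≤ dist θ₁ θ₂ * (1 + ‖x‖ ^ 2) := theta_apply_le θ₁ θ₂ x
  have hnum : |(Theta.shift x θ₁).1 y - (Theta.shift x θ₂).1 y| ≤
      |θ₁.1 (y + x) - θ₂.1 (y + x)| + |θ₁.1 x - θ₂.1 x| := by
    have : (Theta.shift x θ₁).1 y - (Theta.shift x θ₂).1 y =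
        (θ₁.1 (y + x) - θ₂.1 (y + x)) - (θ₁.1 x - θ₂.1 x) := by
      simp [Theta.shift]; ring
    rw [this]
    exact abs_sub _ _
  have hyx : ‖y + x‖ ≤ ‖y‖ + ‖x‖ := norm_add_le _ _
  have hyx2 : ‖y + x‖ ^ 2 ≤ (‖y‖ + ‖x‖) ^ 2 := by
    have := norm_nonneg (y + x)
    nlinarith [norm_nonneg y, norm_nonneg x]
  calc |(Theta.shift x θ₁).1 y - (Theta.shift x θ₂).1 y|
      ≤ |θ₁.1 (y + x) - θ₂.1 (y + x)| + |θ₁.1 x - θ₂.1 x| := hnum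
    _ ≤ dist θ₁ θ₂ * (1 + ‖y + x‖ ^ 2) + dist θ₁ θ₂ * (1 + ‖x‖ ^ 2) := add_le_add h1 h2
    _ ≤ (3 + 3 * ‖x‖ ^ 2) * dist θ₁ θ₂ * (1 + ‖y‖ ^ 2) := by
        nlinarith [norm_nonneg y, norm_nonneg x, sq_nonneg (‖y‖ - ‖x‖), sq_nonneg (‖y‖ * ‖x‖),
          mul_nonneg hD (sq_nonneg ‖y‖), mul_nonneg hD (sq_nonneg ‖x‖),
          mul_nonneg (mul_nonneg hD (sq_nonneg ‖y‖)) (sq_nonneg ‖x‖)]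

theorem shift_continuous (x : EucSp d) : Continuous (Theta.shift (d := d) (C := C) x) := by
  have h : LipschitzWith (⟨3 + 3 * ‖x‖ ^ 2, by positivity⟩ : NNReal) (Theta.shift (d := d) (C := C) x) := by
    apply LipschitzWith.of_dist_le_mul
    intro θ₁ θ₂
    exact shift_lipschitz x θ₁ θ₂
  exact h.continuous

end Aux
section Aux2

variable {α : Type*} [MetricSpace α]

/-- Lipschitz approximations to the indicator of a closed set in a metric space. -/
noncomputable def cseq (F : Set α) (k : ℕ) (s : α) : ℝ :=
  max 0 (1 - k * Metric.infDist s F)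

theorem cseq_nonneg (F : Set α) (k : ℕ) (s : α) : 0 ≤ cseq F k s := le_max_left _ _

theorem cseq_le_one (F : Set α) (k : ℕ) (s : α) : cseq F k s ≤ 1 := by
  have h := Metric.infDist_nonneg (s := F) (x := s)
  have h2 : 1 - (k:ℝ) * Metric.infDist s F ≤ 1 := by
    have : (0:ℝ) ≤ (k:ℝ) * Metric.infDist s F := by positivity
    linarith
  exact max_le (by norm_num) h2

theorem cseq_continuous (F : Set α) (k : ℕ) : Continuous (cseq F k) :=
  continuous_const.max (continuous_const.sub (continuous_const.mul
    (Metric.continuous_infDist_pt F)))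

theorem cseq_lip (F : Set α) (k : ℕ) (s t : α) :
    |cseq F k s - cseq F k t| ≤ k * dist s t := by
  have h1 : |cseq F k s - cseq F k t| ≤
      |(1 - (k:ℝ) * Metric.infDist s F) - (1 - (k:ℝ) * Metric.infDist t F)| := by
    unfold cseq
    rw [max_comm 0 _, max_comm 0 _]
    exact abs_max_sub_max_le_abs _ _ _
  have h2 : |(1 - (k:ℝ) * Metric.infDist s F) - (1 - (k:ℝ) * Metric.infDist t F)|
      = (k:ℝ) * |Metric.infDist s F - Metric.infDist t F| := by
    have e : (1 - (k:ℝ) * Metric.infDist s F) - (1 - (k:ℝ) * Metric.infDist t F)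
        = (k:ℝ) * (Metric.infDist t F - Metric.infDist s F) := by ring
    rw [e, abs_mul, Nat.abs_cast, abs_sub_comm]
  have h3 : |Metric.infDist s F - Metric.infDist t F| ≤ dist s t := by
    have := (Metric.lipschitz_infDist_pt F).dist_le_mul s t
    rw [Real.dist_eq] at this
    simpa using this
  calc |cseq F k s - cseq F k t| ≤ _ := h1
    _ = _ := h2
    _ ≤ (k:ℝ) * dist s t := by
        exact mul_le_mul_of_nonneg_left h3 (by positivity)

theorem cseq_tendsto {F : Set α} (hF : IsClosed F) (hne : F.Nonempty) (s : α) :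
    Tendsto (fun k => cseq F k s) atTop (𝓝 (Set.indicator F (fun _ => (1:ℝ)) s)) := by
  by_cases hs : s ∈ F
  · have : ∀ k : ℕ, cseq F k s = 1 := by
      intro k
      unfold cseq
      rw [Metric.infDist_zero_of_mem hs]
      simp
    rw [Set.indicator_of_mem hs]
    simpa [this] using tendsto_const_nhds
  · have hd : 0 < Metric.infDist s F := (hF.notMem_iff_infDist_pos hne).mp hs
    rw [Set.indicator_of_notMem hs]
    have hev : ∀ᶠ k : ℕ in atTop, cseq F k s = 0 := by
      filter_upwards [(tendsto_natCast_atTop_atTop (R := ℝ)).eventually_ge_atTop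
        (1 / Metric.infDist s F)] with k hk
      unfold cseq
      have : (1:ℝ) ≤ (k:ℝ) * Metric.infDist s F := by
        rw [div_le_iff₀ hd] at hk
        linarith
      exact max_eq_left (by linarith)
    exact Tendsto.congr' (hev.mono fun k hk => hk.symm) tendsto_const_nhds

end Aux2
/-- If the push-forwards `μ_n = Φ_n ♯ ℙ` of a stationary, uniformly Lipschitz, uniformly
bounded family converge weakly to `μ`, then `μ` is invariant under every `τ̃_x`. -/
theorem stmt3 {d : ℕ} {Ω : Type*} [TopologicalSpace Ω] [PolishSpace Ω]
    [MeasurableSpace Ω] [BorelSpace Ω]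
    (ℙ : Measure Ω) [IsProbabilityMeasure ℙ]
    -- the group of measure-preserving transformations
    (τ : EucSp d → Ω → Ω)
    (hτgrp : ∀ x y ω, τ (x + y) ω = τ x (τ y ω))
    (hτzero : ∀ ω, τ 0 ω = ω)
    (hτcont : ∀ x, Continuous (τ x))
    (hτmp : ∀ x, MeasurePreserving (τ x) ℙ ℙ)
    (hτmeas : Measurable fun p : EucSp d × Ω => τ p.1 p.2)
    -- the data
    (C : ℝ) (hC : 0 < C)
    (δ : ℕ → ℝ) (hδpos : ∀ n, 0 < δ n) (hδanti : Antitone δ)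
    (hδlim : Tendsto δ atTop (𝓝 0))
    (w : ℕ → EucSp d → Ω → ℝ)
    (hwmeas : ∀ n, Measurable fun p : EucSp d × Ω => w n p.1 p.2)
    (hwstat : ∀ n x y ω, w n y (τ x ω) = w n (y + x) ω)
    (hwlip : ∀ n ω x y, |w n x ω - w n y ω| ≤ C * ‖x - y‖)
    (hwbd : ∀ n x ω, |δ n * w n x ω| ≤ C)
    -- the maps `Φ_n` and the push-forward measures `μ_n`
    (Φ : ℕ → Ω → Ω × Theta d C × (Set.Icc (-C) C : Set ℝ))
    (hΦ : ∀ n ω, (Φ n ω).1 = ω ∧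
      (∀ x, ((Φ n ω).2.1).1 x = w n x ω - w n 0 ω) ∧
      ((Φ n ω).2.2 : ℝ) = -(δ n * w n 0 ω))
    (μseq : ℕ → Measure (Ω × Theta d C × (Set.Icc (-C) C : Set ℝ)))
    (hμseq : ∀ n, μseq n = ℙ.map (Φ n))
    -- weak convergence to `μ`
    (μ : Measure (Ω × Theta d C × (Set.Icc (-C) C : Set ℝ)))
    [IsProbabilityMeasure μ]
    (hconv : ∀ f : BoundedContinuousFunction (Ω × Theta d C × (Set.Icc (-C) C : Set ℝ)) ℝ,
      Tendsto (fun n => ∫ p, f p ∂(μseq n)) atTop (𝓝 (∫ p, f p ∂μ))) :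
    ∀ x : EucSp d,
      μ.map (fun p : Ω × Theta d C × (Set.Icc (-C) C : Set ℝ) =>
        (τ x p.1, Theta.shift x p.2.1, p.2.2)) = μ := by
  intro x
  set T : (Ω × Theta d C × (Set.Icc (-C) C : Set ℝ)) → (Ω × Theta d C × (Set.Icc (-C) C : Set ℝ)) :=
    fun p => (τ x p.1, Theta.shift x p.2.1, p.2.2) with hT
  have hTcont : Continuous T :=
    ((hτcont x).comp continuous_fst).prodMk
      (((shift_continuous x).comp (continuous_fst.comp continuous_snd)).prodMk
        (continuous_snd.comp continuous_snd))
  have hTmeas : Measurable T :=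
    ((hτcont x).measurable.comp measurable_fst).prodMk
      ((((shift_continuous x).measurable).comp (measurable_fst.comp measurable_snd)).prodMk
        (measurable_snd.comp measurable_snd))
  haveI : IsProbabilityMeasure (μ.map T) := Measure.isProbabilityMeasure_map hTmeas.aemeasurable
  -- Step 1: eventual a.e.-measurability of `Φ n`
  have hΦae : ∀ᶠ n in atTop, AEMeasurable (Φ n) ℙ := by
    by_contra hcon
    rw [Filter.not_eventually] at hcon
    have h1 := hconv (BoundedContinuousFunction.const (Ω × Theta d C × (Set.Icc (-C) C : Set ℝ)) (1 : ℝ))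
    have hμ1 : ∫ p, (BoundedContinuousFunction.const (Ω × Theta d C × (Set.Icc (-C) C : Set ℝ)) (1 : ℝ)) p ∂μ = 1 := by
      simp
    rw [hμ1] at h1
    have h2 : ∀ᶠ n in atTop,
        (1 : ℝ) / 2 < ∫ p, (BoundedContinuousFunction.const (Ω × Theta d C × (Set.Icc (-C) C : Set ℝ)) (1 : ℝ)) p ∂(μseq n) :=
      h1.eventually (lt_mem_nhds (by norm_num))
    rcases (hcon.and_eventually h2).exists with ⟨n, hn, hn2⟩
    rw [hμseq n, Measure.map_of_not_aemeasurable hn, integral_zero_measure] at hn2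
    linarith
  -- Step 2: key identity for test functions Lipschitz in the third coordinate
  have key : ∀ (g : BoundedContinuousFunction (Ω × Theta d C × (Set.Icc (-C) C : Set ℝ)) ℝ)
      (L : ℝ), 0 ≤ L → Measurable (⇑g) →
      (∀ p q : Ω × Theta d C × (Set.Icc (-C) C : Set ℝ), p.1 = q.1 → p.2.1 = q.2.1 →
        |g p - g q| ≤ L * |((p.2.2 : ℝ)) - ((q.2.2 : ℝ))|) →
      ∫ p, g p ∂(μ.map T) = ∫ p, g p ∂μ := by
    intro g L hL hgm hg
    obtain ⟨cb, hcb⟩ := g.map_bounded'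
    set G : BoundedContinuousFunction (Ω × Theta d C × (Set.Icc (-C) C : Set ℝ)) ℝ :=
      ⟨⟨fun p => g (T p), g.continuous.comp hTcont⟩, cb, fun p q => hcb _ _⟩ with hG
    have hGm : Measurable (⇑G) := hgm.comp hTmeas
    have hGint := hconv G
    have hgint := hconv g
    have hδ0 : Tendsto (fun n => L * (C * ‖x‖) * δ n) atTop (𝓝 0) := by
      simpa using hδlim.const_mul (L * (C * ‖x‖))
    have hdiff : Tendsto (fun n => (∫ p, G p ∂(μseq n)) - ∫ p, g p ∂(μseq n)) atTop (𝓝 0) := by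
      apply squeeze_zero_norm' ?_ hδ0
      filter_upwards [hΦae] with n hn
      -- rewrite both integrals as integrals over ℙ
      have hGn : ∫ p, G p ∂(μseq n) = ∫ ω, g (T (Φ n ω)) ∂ℙ := by
        rw [hμseq n, integral_map hn hGm.stronglyMeasurable.aestronglyMeasurable]
        rfl
      have hΦτae : AEMeasurable (fun ω => Φ n (τ x ω)) ℙ := by
        have hn' : AEMeasurable (Φ n) (ℙ.map (τ x)) := by
          rw [(hτmp x).map_eq]; exact hn
        exact hn'.comp_aemeasurable (hτmp x).measurable.aemeasurable
      have hgn : ∫ p, g p ∂(μseq n) = ∫ ω, g (Φ n (τ x ω)) ∂ℙ := by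
        rw [hμseq n, integral_map hn hgm.stronglyMeasurable.aestronglyMeasurable]
        calc ∫ ω, g (Φ n ω) ∂ℙ = ∫ ω, g (Φ n ω) ∂(ℙ.map (τ x)) := by rw [(hτmp x).map_eq]
          _ = ∫ ω, g (Φ n (τ x ω)) ∂ℙ := by
              rw [integral_map (hτmp x).measurable.aemeasurable]
              rw [(hτmp x).map_eq]
              exact (hgm.comp_aemeasurable hn).aestronglyMeasurable
      -- pointwise bound
      have hptw : ∀ ω, |g (T (Φ n ω)) - g (Φ n (τ x ω))| ≤ L * (C * ‖x‖) * δ n := by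
        intro ω
        have hp1 : (T (Φ n ω)).1 = (Φ n (τ x ω)).1 := by
          show τ x (Φ n ω).1 = _
          rw [(hΦ n ω).1, (hΦ n (τ x ω)).1]
        have hp2 : (T (Φ n ω)).2.1 = (Φ n (τ x ω)).2.1 := by
          apply Subtype.ext
          funext y
          show (Φ n ω).2.1.1 (y + x) - (Φ n ω).2.1.1 x = ((Φ n (τ x ω)).2.1).1 y
          rw [(hΦ n ω).2.1 (y + x), (hΦ n ω).2.1 x, (hΦ n (τ x ω)).2.1 y,
            hwstat n x y ω, hwstat n x 0 ω, zero_add]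
          ring
        have hp3 : |(((T (Φ n ω)).2.2 : ℝ)) - (((Φ n (τ x ω)).2.2 : ℝ))| ≤ C * ‖x‖ * δ n := by
          show |(((Φ n ω).2.2 : ℝ)) - (((Φ n (τ x ω)).2.2 : ℝ))| ≤ _
          rw [(hΦ n ω).2.2, (hΦ n (τ x ω)).2.2, hwstat n x 0 ω, zero_add]
          have h1 : -(δ n * w n 0 ω) - -(δ n * w n x ω) = δ n * (w n x ω - w n 0 ω) := by ring
          rw [h1, abs_mul, abs_of_pos (hδpos n)]
          have h2 := hwlip n ω x 0
          rw [sub_zero] at h2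
          calc δ n * |w n x ω - w n 0 ω| ≤ δ n * (C * ‖x‖) :=
                mul_le_mul_of_nonneg_left h2 (hδpos n).le
            _ = C * ‖x‖ * δ n := by ring
        calc |g (T (Φ n ω)) - g (Φ n (τ x ω))|
            ≤ L * |(((T (Φ n ω)).2.2 : ℝ)) - (((Φ n (τ x ω)).2.2 : ℝ))| := hg _ _ hp1 hp2
          _ ≤ L * (C * ‖x‖ * δ n) := mul_le_mul_of_nonneg_left hp3 hL
          _ = L * (C * ‖x‖) * δ n := by ring
      -- integrability
      have hint1 : Integrable (fun ω => g (T (Φ n ω))) ℙ := by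
        refine (integrable_const ‖g‖).mono'
          ((hGm.comp_aemeasurable hn).aestronglyMeasurable) (ae_of_all _ fun ω => ?_)
        exact g.norm_coe_le_norm _
      have hint2 : Integrable (fun ω => g (Φ n (τ x ω))) ℙ := by
        refine (integrable_const ‖g‖).mono'
          ((hgm.comp_aemeasurable hΦτae).aestronglyMeasurable) (ae_of_all _ fun ω => ?_)
        exact g.norm_coe_le_norm _
      rw [hGn, hgn, ← integral_sub hint1 hint2]
      have := norm_integral_le_of_norm_le_const
        (C := L * (C * ‖x‖) * δ n) (μ := ℙ)
        (f := fun ω => g (T (Φ n ω)) - g (Φ n (τ x ω)))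
        (ae_of_all _ fun ω => by simpa [Real.norm_eq_abs] using hptw ω)
      simpa using this
    have huniq : (∫ p, G p ∂μ) - ∫ p, g p ∂μ = 0 :=
      tendsto_nhds_unique (hGint.sub hgint) hdiff
    calc ∫ p, g p ∂(μ.map T)
        = ∫ p, g (T p) ∂μ :=
          integral_map hTmeas.aemeasurable hgm.stronglyMeasurable.aestronglyMeasurable
      _ = ∫ p, G p ∂μ := rfl
      _ = ∫ p, g p ∂μ := by linarith
  -- Step 3: reduce to closed rectangles
  have hgenΩ : MeasurableSpace.generateFrom {s : Set Ω | IsClosed s} = ‹MeasurableSpace Ω› :=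
    (borel_eq_generateFrom_isClosed (α := Ω)).symm.trans (BorelSpace.measurable_eq).symm
  have hgenΘ : MeasurableSpace.generateFrom {s : Set (Theta d C) | IsClosed s}
      = (inferInstance : MeasurableSpace (Theta d C)) :=
    (borel_eq_generateFrom_isClosed (α := Theta d C)).symm.trans (BorelSpace.measurable_eq).symm
  have hgenI : MeasurableSpace.generateFrom {s : Set (Set.Icc (-C) C : Set ℝ) | IsClosed s}
      = (inferInstance : MeasurableSpace (Set.Icc (-C) C : Set ℝ)) :=
    (borel_eq_generateFrom_isClosed (α := (Set.Icc (-C) C : Set ℝ))).symm.trans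
      (BorelSpace.measurable_eq).symm
  have hspanΩ : IsCountablySpanning {s : Set Ω | IsClosed s} :=
    ⟨fun _ => Set.univ, fun _ => isClosed_univ, Set.iUnion_const _⟩
  have hspanΘ : IsCountablySpanning {s : Set (Theta d C) | IsClosed s} :=
    ⟨fun _ => Set.univ, fun _ => isClosed_univ, Set.iUnion_const _⟩
  have hspanI : IsCountablySpanning
      {s : Set (Set.Icc (-C) C : Set ℝ) | IsClosed s} :=
    ⟨fun _ => Set.univ, fun _ => isClosed_univ, Set.iUnion_const _⟩
  have hgenY : MeasurableSpace.generateFrom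
      (Set.image2 (· ×ˢ ·) {s : Set (Theta d C) | IsClosed s}
        {s : Set (Set.Icc (-C) C : Set ℝ) | IsClosed s})
      = (Prod.instMeasurableSpace : MeasurableSpace (Theta d C × (Set.Icc (-C) C : Set ℝ))) :=
    generateFrom_eq_prod hgenΘ hgenI hspanΘ hspanI
  have hspanY : IsCountablySpanning
      (Set.image2 (· ×ˢ ·) {s : Set (Theta d C) | IsClosed s}
        {s : Set (Set.Icc (-C) C : Set ℝ) | IsClosed s}) := by
    refine ⟨fun _ => Set.univ, fun _ => ⟨Set.univ, isClosed_univ, Set.univ, isClosed_univ, ?_⟩,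
      Set.iUnion_const _⟩
    exact Set.univ_prod_univ
  have hgenX : MeasurableSpace.generateFrom
      (Set.image2 (· ×ˢ ·) {s : Set Ω | IsClosed s}
        (Set.image2 (· ×ˢ ·) {s : Set (Theta d C) | IsClosed s}
          {s : Set (Set.Icc (-C) C : Set ℝ) | IsClosed s}))
      = (Prod.instMeasurableSpace :
          MeasurableSpace (Ω × Theta d C × (Set.Icc (-C) C : Set ℝ))) :=
    generateFrom_eq_prod hgenΩ hgenY hspanΩ hspanY
  have hpiΩ : IsPiSystem {s : Set Ω | IsClosed s} := fun s hs t ht _ => hs.inter ht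
  have hpiΘ : IsPiSystem {s : Set (Theta d C) | IsClosed s} := fun s hs t ht _ => hs.inter ht
  have hpiI : IsPiSystem {s : Set (Set.Icc (-C) C : Set ℝ) | IsClosed s} :=
    fun s hs t ht _ => hs.inter ht
  have hpi : IsPiSystem (Set.image2 (· ×ˢ ·) {s : Set Ω | IsClosed s}
      (Set.image2 (· ×ˢ ·) {s : Set (Theta d C) | IsClosed s}
        {s : Set (Set.Icc (-C) C : Set ℝ) | IsClosed s})) :=
    hpiΩ.prod (hpiΘ.prod hpiI)
  refine MeasureTheory.ext_of_generate_finite _ hgenX.symm hpi ?_ ?_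
  swap
  · simp [measure_univ]
  rintro s ⟨F₁, hF₁, s', ⟨F₂, hF₂, F₃, hF₃, rfl⟩, rfl⟩
  simp only [Set.mem_setOf_eq] at hF₁ hF₂ hF₃
  rcases F₃.eq_empty_or_nonempty with h3e | h3ne
  · simp [h3e]
  have hRm : MeasurableSet (F₁ ×ˢ F₂ ×ˢ F₃) :=
    hF₁.measurableSet.prod (hF₂.measurableSet.prod hF₃.measurableSet)
  set A := hF₁.apprSeq with hA
  set B := hF₂.apprSeq with hB
  set gfun : ℕ → (Ω × Theta d C × (Set.Icc (-C) C : Set ℝ)) → ℝ :=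
    fun k p => (A k p.1 : ℝ) * (B k p.2.1 : ℝ) * cseq F₃ k p.2.2 with hgfun
  have hfmem : ∀ (k : ℕ) (p : Ω × Theta d C × (Set.Icc (-C) C : Set ℝ)),
      gfun k p ∈ Set.Icc (0 : ℝ) 1 := by
    intro k p
    have ha0 : (0:ℝ) ≤ (A k p.1 : ℝ) := NNReal.coe_nonneg _
    have hb0 : (0:ℝ) ≤ (B k p.2.1 : ℝ) := NNReal.coe_nonneg _
    have hc0 := cseq_nonneg F₃ k p.2.2
    have hc1 := cseq_le_one F₃ k p.2.2
    have ha1 : (A k p.1 : ℝ) ≤ 1 := by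
      exact_mod_cast HasOuterApproxClosed.apprSeq_apply_le_one hF₁ k p.1
    have hb1 : (B k p.2.1 : ℝ) ≤ 1 := by
      exact_mod_cast HasOuterApproxClosed.apprSeq_apply_le_one hF₂ k p.2.1
    constructor
    · show (0:ℝ) ≤ (A k p.1 : ℝ) * (B k p.2.1 : ℝ) * cseq F₃ k p.2.2
      positivity
    · show (A k p.1 : ℝ) * (B k p.2.1 : ℝ) * cseq F₃ k p.2.2 ≤ 1
      calc (A k p.1 : ℝ) * (B k p.2.1 : ℝ) * cseq F₃ k p.2.2
          ≤ (A k p.1 : ℝ) * (B k p.2.1 : ℝ) * 1 :=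
            mul_le_mul_of_nonneg_left hc1 (by positivity)
        _ = (A k p.1 : ℝ) * (B k p.2.1 : ℝ) := mul_one _
        _ ≤ 1 * 1 := mul_le_mul ha1 hb1 hb0 zero_le_one
        _ = 1 := one_mul 1
  have hgcont : ∀ k, Continuous (gfun k) := fun k =>
    (((NNReal.continuous_coe.comp (A k).continuous).comp continuous_fst).mul
      ((NNReal.continuous_coe.comp (B k).continuous).comp
        (continuous_fst.comp continuous_snd))).mul
      ((cseq_continuous F₃ k).comp (continuous_snd.comp continuous_snd))
  have hgmeas : ∀ k, Measurable (gfun k) := fun k =>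
    ((((NNReal.continuous_coe.comp (A k).continuous).measurable).comp measurable_fst).mul
      (((NNReal.continuous_coe.comp (B k).continuous).measurable).comp
        (measurable_fst.comp measurable_snd))).mul
      (((cseq_continuous F₃ k).measurable).comp (measurable_snd.comp measurable_snd))
  set gk : ℕ → BoundedContinuousFunction (Ω × Theta d C × (Set.Icc (-C) C : Set ℝ)) ℝ :=
    fun k => ⟨⟨gfun k, hgcont k⟩, 2, fun p q => by
      have h1 := hfmem k p
      have h2 := hfmem k q
      rw [Real.dist_eq, abs_sub_le_iff]
      constructor <;> linarith [h1.1, h1.2, h2.1, h2.2]⟩ with hgk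
  have hkey : ∀ k, ∫ p, gk k p ∂(μ.map T) = ∫ p, gk k p ∂μ := by
    intro k
    refine key (gk k) k (Nat.cast_nonneg k) (hgmeas k) ?_
    intro p q h1 h2
    show |gfun k p - gfun k q| ≤ _
    have he : gfun k p - gfun k q
        = (A k p.1 : ℝ) * (B k p.2.1 : ℝ) * (cseq F₃ k p.2.2 - cseq F₃ k q.2.2) := by
      show (A k p.1 : ℝ) * (B k p.2.1 : ℝ) * cseq F₃ k p.2.2
        - (A k q.1 : ℝ) * (B k q.2.1 : ℝ) * cseq F₃ k q.2.2 = _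
      rw [h1, h2]
      ring
    rw [he, abs_mul]
    have hab : |(A k p.1 : ℝ) * (B k p.2.1 : ℝ)| ≤ 1 := by
      have h1' := hfmem k p
      have ha0 : (0:ℝ) ≤ (A k p.1 : ℝ) := NNReal.coe_nonneg _
      have hb0 : (0:ℝ) ≤ (B k p.2.1 : ℝ) := NNReal.coe_nonneg _
      have ha1 : (A k p.1 : ℝ) ≤ 1 := by
        exact_mod_cast HasOuterApproxClosed.apprSeq_apply_le_one hF₁ k p.1
      have hb1 : (B k p.2.1 : ℝ) ≤ 1 := by
        exact_mod_cast HasOuterApproxClosed.apprSeq_apply_le_one hF₂ k p.2.1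
      rw [abs_of_nonneg (by positivity)]
      nlinarith
    have hcl := cseq_lip F₃ k p.2.2 q.2.2
    have hd : dist p.2.2 q.2.2 = |((p.2.2 : ℝ)) - ((q.2.2 : ℝ))| := by
      rw [Subtype.dist_eq, Real.dist_eq]
    calc |(A k p.1 : ℝ) * (B k p.2.1 : ℝ)| * |cseq F₃ k p.2.2 - cseq F₃ k q.2.2|
        ≤ 1 * ((k : ℝ) * dist p.2.2 q.2.2) := by
          apply mul_le_mul hab hcl (abs_nonneg _) (by norm_num)
      _ = (k : ℝ) * |((p.2.2 : ℝ)) - ((q.2.2 : ℝ))| := by rw [one_mul, hd]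
  have hpt : ∀ p : Ω × Theta d C × (Set.Icc (-C) C : Set ℝ),
      Tendsto (fun k => gfun k p) atTop
        (𝓝 (Set.indicator (F₁ ×ˢ F₂ ×ˢ F₃) (fun _ => (1:ℝ)) p)) := by
    intro p
    have ha : Tendsto (fun k => ((A k p.1 : NNReal) : ℝ)) atTop
        (𝓝 ((Set.indicator F₁ (fun _ => (1:NNReal)) p.1 : NNReal) : ℝ)) := by
      have h0 := HasOuterApproxClosed.tendsto_apprSeq hF₁
      rw [tendsto_pi_nhds] at h0
      exact (NNReal.continuous_coe.tendsto _).comp (h0 p.1)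
    have hb : Tendsto (fun k => ((B k p.2.1 : NNReal) : ℝ)) atTop
        (𝓝 ((Set.indicator F₂ (fun _ => (1:NNReal)) p.2.1 : NNReal) : ℝ)) := by
      have h0 := HasOuterApproxClosed.tendsto_apprSeq hF₂
      rw [tendsto_pi_nhds] at h0
      exact (NNReal.continuous_coe.tendsto _).comp (h0 p.2.1)
    have hc := cseq_tendsto hF₃ h3ne p.2.2
    have hmul := (ha.mul hb).mul hc
    have hval : Set.indicator (F₁ ×ˢ F₂ ×ˢ F₃) (fun _ => (1:ℝ)) p
        = ((Set.indicator F₁ (fun _ => (1:NNReal)) p.1 : NNReal) : ℝ)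
          * ((Set.indicator F₂ (fun _ => (1:NNReal)) p.2.1 : NNReal) : ℝ)
          * Set.indicator F₃ (fun _ => (1:ℝ)) p.2.2 := by
      by_cases h1 : p.1 ∈ F₁ <;> by_cases h2 : p.2.1 ∈ F₂ <;> by_cases h3 : p.2.2 ∈ F₃ <;>
        simp [Set.indicator_apply, h1, h2, h3, Set.mem_prod]
    rw [hval]
    exact hmul
  have hDCT : ∀ ν : Measure (Ω × Theta d C × (Set.Icc (-C) C : Set ℝ)),
      IsProbabilityMeasure ν →
      Tendsto (fun k => ∫ p, gk k p ∂ν) atTop (𝓝 ((ν (F₁ ×ˢ F₂ ×ˢ F₃)).toReal)) := by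
    intro ν hν
    have h := MeasureTheory.tendsto_integral_of_dominated_convergence
      (F := fun k p => gk k p) (f := Set.indicator (F₁ ×ˢ F₂ ×ˢ F₃)
        (1 : (Ω × Theta d C × (Set.Icc (-C) C : Set ℝ)) → ℝ))
      (bound := fun _ => (1:ℝ)) (μ := ν)
      (fun k => (hgmeas k).stronglyMeasurable.aestronglyMeasurable)
      (integrable_const 1)
      (fun k => ae_of_all _ fun p => by
        have hm := hfmem k p
        show ‖gfun k p‖ ≤ 1
        rw [Real.norm_eq_abs, abs_of_nonneg hm.1]
        exact hm.2)
      (ae_of_all _ fun p => hpt p)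
    rwa [integral_indicator_one hRm] at h
  have h1 := hDCT (μ.map T) ‹_›
  have h2 := hDCT μ ‹_›
  have h1' : Tendsto (fun k => ∫ p, gk k p ∂μ) atTop
      (𝓝 (((μ.map T) (F₁ ×ˢ F₂ ×ˢ F₃)).toReal)) := by
    refine h1.congr fun k => hkey k
  have := tendsto_nhds_unique h1' h2
  exact (ENNReal.toReal_eq_toReal_iff' (measure_ne_top _ _) (measure_ne_top _ _)).mp this

end
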